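/- Let η ∈ (0, 1) and define K(α, η) = (η·cos(3α) − cos(α))/(2η·cos(2α) + η + 1). Then K(α, η) < 0 for every α ∈ (0, π/2), and K(π/2, η) = 0. Consequently the minimal offset d_min = (w(m_b+m_s)/(2m_b))·K(α, η) is negative for every aperture angle α ∈ (0, π/2) (with w, m_b, m_s > 0), and equals zero in the flat-plate case α = π/2. -/
import Mathlib


/-- Corollary 1 / Fig. 6: `K(α,η) < 0` for `α ∈ (0, π/2)` and `K(π/2,η) = 0`; hence the
minimal offset `d_min = (w(m_b+m_s)/(2m_b))·K(α,η)` is negative for `α ∈ (0, π/2)` and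
zero in the flat-plate case `α = π/2`. -/
theorem stmt_7 (η : ℝ) (hη : η ∈ Set.Ioo (0:ℝ) 1) (K : ℝ → ℝ)
    (hK : ∀ α, K α = (η*Real.cos (3*α) - Real.cos α) /
      (2*η*Real.cos (2*α) + η + 1)) :
    (∀ α ∈ Set.Ioo 0 (Real.pi/2), K α < 0) ∧
    K (Real.pi/2) = 0 ∧
    (∀ w m_b m_s : ℝ, 0 < w → 0 < m_b → 0 < m_s →
      (∀ α ∈ Set.Ioo 0 (Real.pi/2), (w*(m_b + m_s)/(2*m_b)) * K α < 0) ∧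
      (w*(m_b + m_s)/(2*m_b)) * K (Real.pi/2) = 0) := by
  obtain ⟨hη0, hη1⟩ := hη
  have hneg : ∀ α ∈ Set.Ioo 0 (Real.pi/2), K α < 0 := by
    intro α ⟨ha0, ha2⟩
    have hc0 : 0 < Real.cos α := Real.cos_pos_of_mem_Ioo ⟨by linarith [Real.pi_pos], ha2⟩
    have hs : 0 < Real.sin α := Real.sin_pos_of_pos_of_lt_pi ha0
      (by linarith [Real.pi_pos])
    have hc2 : Real.cos α ^ 2 < 1 := by
      nlinarith [Real.sin_sq_add_cos_sq α]
    rw [hK, Real.cos_three_mul, Real.cos_two_mul]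
    set c := Real.cos α
    apply div_neg_of_neg_of_pos
    · nlinarith [mul_pos (mul_pos hη0 hc0) (show (0:ℝ) < 1 - c^2 by linarith),
        mul_pos hc0 (show (0:ℝ) < 1 - η by linarith)]
    · nlinarith [sq_nonneg c]
  have hzero : K (Real.pi/2) = 0 := by
    rw [hK]
    have h3 : Real.cos (3 * (Real.pi/2)) = 0 := by
      have : 3 * (Real.pi/2) = Real.pi/2 + Real.pi := by ring
      rw [this, Real.cos_add_pi, Real.cos_pi_div_two, neg_zero]
    rw [h3, Real.cos_pi_div_two]
    simp
  refine ⟨hneg, hzero, fun w m_b m_s hw hb hs => ⟨fun α hα => ?_, by rw [hzero]; ring⟩⟩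
  have hcoef : 0 < w*(m_b + m_s)/(2*m_b) := by positivity
  exact mul_neg_of_pos_of_neg hcoef (hneg α hα)
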